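/- Let x* be a recurrent state of the irreducible aperiodic finite Markov chain with transition matrix P, and τ_{x*} = inf{i ≥ 1 : Φ_i = x*} the first return time. Then Λ(α) is the unique real solution Λ of the fixed-point equation E_{x*}[exp(∑_{i=0}^{τ_{x*}−1} (α C(Φ_i) − Λ))] = 1. -/

import Mathlib

open Matrix Filter Topology

/-- A (row-)stochastic matrix on a finite state space. -/
def StochasticMat {X : Type*} [Fintype X] (P : Matrix X X ℝ) : Prop :=
  (∀ x y, 0 ≤ P x y) ∧ ∀ x, ∑ y, P x y = 1

/-- A primitive nonnegative matrix: some power has all entries strictly positive.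
For finite stochastic matrices this is equivalent to irreducibility together with
aperiodicity. -/
def PrimitiveMat {X : Type*} [Fintype X] [DecidableEq X] (P : Matrix X X ℝ) : Prop :=
  ∃ n : ℕ, 0 < n ∧ ∀ x y, 0 < (P ^ n) x y

/-- `retE P xs x F = E_x[ F τ (Φ_0, …, Φ_τ) ]` where `τ = inf {i ≥ 1 : Φ_i = xs}` is the
first return/hitting time of `xs`, written as a sum over the return time `τ = k+1` and the
intermediate states `(Φ_1, …, Φ_k)` (all ≠ `xs`); the path fed to `F` is
`(x, Φ_1, …, Φ_k, xs) : Fin (k+2) → X`.  In particular, taking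
`F k p = exp (∑_{i=0}^{k} f (p i))` gives `E_x[exp (∑_{i=0}^{τ-1} f(Φ_i))]`, and
`F k p = (k+1)` gives `E_x[τ]`. -/
noncomputable def retE {X : Type*} [Fintype X] [DecidableEq X] (P : Matrix X X ℝ)
    (xs x : X) (F : (k : ℕ) → (Fin (k + 2) → X) → ℝ) : ℝ :=
  ∑' k : ℕ, ∑ w : Fin k → X,
    if ∀ i, w i ≠ xs then
      (∏ i : Fin (k + 1),
          P ((Fin.snoc (Fin.cons x w) xs : Fin (k+2) → X) i.castSucc) ((Fin.snoc (Fin.cons x w) xs : Fin (k+2) → X) i.succ)) *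
        F k (Fin.snoc (Fin.cons x w) xs : Fin (k+2) → X)
    else 0

namespace S2Aux

variable {X : Type*} [Fintype X] [DecidableEq X]

/-- the path x, w_0, ..., w_{k-1}, xs -/
noncomputable def pathv (xs x : X) {k : ℕ} (w : Fin k → X) : Fin (k+2) → X :=
  Fin.snoc (Fin.cons x w) xs

set_option linter.unusedSectionVars false

lemma pathv_zero (xs x : X) {k : ℕ} (w : Fin k → X) : pathv xs x w 0 = x := by
  rw [← Fin.castSucc_zero, pathv, Fin.snoc_castSucc, Fin.cons_zero]

lemma pathv_last (xs x : X) {k : ℕ} (w : Fin k → X) : pathv xs x w (Fin.last (k+1)) = xs := by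
  simp [pathv]

lemma pathv_comp_succ (xs x y : X) {k : ℕ} (w : Fin k → X) :
    (pathv xs x (Fin.cons y w)) ∘ Fin.succ = pathv xs y w := by
  funext i
  refine Fin.lastCases ?_ (fun j => ?_) i
  · show pathv xs x (Fin.cons y w) (Fin.last (k+1)).succ = _
    rw [← Fin.succ_last]
    simp [pathv]
  · show pathv xs x (Fin.cons y w) (j.castSucc).succ = _
    rw [Fin.succ_castSucc]
    unfold pathv
    rw [Fin.snoc_castSucc, Fin.snoc_castSucc, Fin.cons_succ]

/-- probability of hitting xs exactly at time k+1, path weight sum -/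
noncomputable def term (M : Matrix X X ℝ) (xs x : X) (k : ℕ) : ℝ :=
  ∑ w : Fin k → X, if ∀ i, w i ≠ xs then
    ∏ i : Fin (k+1), M (pathv xs x w i.castSucc) (pathv xs x w i.succ) else 0

/-- probability of avoiding xs during the first n steps -/
noncomputable def uu (M : Matrix X X ℝ) (xs : X) : ℕ → X → ℝ
  | 0 => fun _ => 1
  | n+1 => fun x => ∑ y, if y ≠ xs then M x y * uu M xs n y else 0

lemma term_zero (M : Matrix X X ℝ) (xs x : X) : term M xs x 0 = M x xs := by
  rw [term]
  rw [Finset.sum_eq_single (fun i => i.elim0)]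
  · simp only [IsEmpty.forall_iff, if_true]
    rw [Fin.prod_univ_one]
    rw [show ((0:Fin 1).castSucc) = (0 : Fin 2) from rfl, show ((0:Fin 1).succ) = (Fin.last 1) from rfl,
      pathv_zero, pathv_last]
  · intro b _ hb; exact absurd (funext fun i => i.elim0) hb
  · intro hmem; exact absurd (Finset.mem_univ _) hmem

lemma prod_pathv_cons (M : Matrix X X ℝ) (xs x y : X) {k : ℕ} (w : Fin k → X) :
    ∏ i : Fin (k+2), M (pathv xs x (Fin.cons y w) i.castSucc) (pathv xs x (Fin.cons y w) i.succ)
      = M x y * ∏ i : Fin (k+1), M (pathv xs y w i.castSucc) (pathv xs y w i.succ) := by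
  rw [Fin.prod_univ_succ]
  refine congrArg₂ (· * ·) ?_ ?_
  · rw [show ((0 : Fin (k+2)).castSucc) = (0 : Fin (k+3)) from rfl, pathv_zero]
    refine congrArg (M x) ?_
    show pathv xs x (Fin.cons y w) ((0 : Fin (k+2)).succ) = y
    rw [show ((0:Fin (k+2)).succ) = ((0:Fin (k+1)).succ).castSucc from rfl]
    unfold pathv
    rw [Fin.snoc_castSucc, Fin.cons_succ, Fin.cons_zero]
  · refine Finset.prod_congr rfl fun i _ => ?_
    rw [← pathv_comp_succ xs x y w]
    simp only [Function.comp_apply]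
    rw [Fin.succ_castSucc]

lemma term_succ (M : Matrix X X ℝ) (xs x : X) (k : ℕ) :
    term M xs x (k+1) = ∑ y, if y ≠ xs then M x y * term M xs y k else 0 := by
  rw [term, ← Equiv.sum_comp (Fin.consEquiv fun _ => X), Fintype.sum_prod_type]
  refine Finset.sum_congr rfl fun y _ => ?_
  by_cases hy : y ≠ xs
  · rw [if_pos hy, term, Finset.mul_sum]
    refine Finset.sum_congr rfl fun w _ => ?_
    have hce : ((Fin.consEquiv fun _ => X) (y, w) : Fin (k+1) → X) = Fin.cons y w := rfl
    rw [hce, prod_pathv_cons]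
    by_cases hw : ∀ i, w i ≠ xs
    · rw [if_pos fun i => by
        refine Fin.cases ?_ (fun j => ?_) i
        · simpa using hy
        · simpa using hw j, if_pos hw]
    · rw [if_neg (fun hc => hw fun i => by simpa using hc i.succ), if_neg hw, mul_zero]
  · rw [if_neg hy]
    refine Finset.sum_eq_zero fun w _ => ?_
    have hce : ((Fin.consEquiv fun _ => X) (y, w) : Fin (k+1) → X) = Fin.cons y w := rfl
    rw [hce, if_neg]
    push_neg at hy
    intro hc
    exact (hc 0) (by simpa using hy)


variable {X : Type*} [Fintype X] [DecidableEq X]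

set_option linter.unusedSectionVars false

lemma sum_ite_ne (f : X → ℝ) (xs : X) :
    ∑ y, (if y ≠ xs then f y else 0) = (∑ y, f y) - f xs := by
  have h1 : ∑ y, (if y = xs then f y else 0) = f xs := by simp
  rw [← h1, ← Finset.sum_sub_distrib]
  refine Finset.sum_congr rfl fun y _ => ?_
  by_cases h : y = xs <;> simp [h]

lemma uu_zero (M : Matrix X X ℝ) (xs x : X) : uu M xs 0 x = 1 := rfl

lemma uu_succ (M : Matrix X X ℝ) (xs x : X) (n : ℕ) :
    uu M xs (n+1) x = ∑ y, if y ≠ xs then M x y * uu M xs n y else 0 := rfl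

lemma uu_nonneg {M : Matrix X X ℝ} (h0 : ∀ x y, 0 ≤ M x y) (xs : X) :
    ∀ n x, 0 ≤ uu M xs n x := by
  intro n
  induction n with
  | zero => intro x; rw [uu_zero]; norm_num
  | succ n ih =>
    intro x
    rw [uu_succ]
    refine Finset.sum_nonneg fun y _ => ?_
    by_cases h : y ≠ xs
    · rw [if_pos h]; exact mul_nonneg (h0 x y) (ih y)
    · rw [if_neg h]

lemma term_nonneg {M : Matrix X X ℝ} (h0 : ∀ x y, 0 ≤ M x y) (xs x : X) (k : ℕ) :
    0 ≤ term M xs x k := by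
  refine Finset.sum_nonneg fun w _ => ?_
  by_cases h : ∀ i, w i ≠ xs
  · rw [if_pos h]; exact Finset.prod_nonneg fun i _ => h0 _ _
  · rw [if_neg h]

lemma uu_telescope {M : Matrix X X ℝ} (hM : StochasticMat M) (xs : X) :
    ∀ k x, uu M xs k x = term M xs x k + uu M xs (k+1) x := by
  intro k
  induction k with
  | zero =>
    intro x
    rw [uu_zero, term_zero, uu_succ]
    simp only [uu_zero, mul_one]
    rw [sum_ite_ne (M x) xs, hM.2 x]
    ring
  | succ k ih =>
    intro x
    rw [uu_succ, term_succ, uu_succ, ← Finset.sum_add_distrib]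
    refine Finset.sum_congr rfl fun y _ => ?_
    by_cases h : y ≠ xs
    · rw [if_pos h, if_pos h, if_pos h, ih y, mul_add]
    · rw [if_neg h, if_neg h, if_neg h, add_zero]

lemma sum_range_term {M : Matrix X X ℝ} (hM : StochasticMat M) (xs : X) (n : ℕ) :
    ∑ k ∈ Finset.range n, term M xs xs k = 1 - uu M xs n xs := by
  have : ∀ k, term M xs xs k = uu M xs k xs - uu M xs (k+1) xs := fun k => by
    rw [uu_telescope hM xs k xs]; ring
  simp only [this]
  rw [Finset.sum_range_sub' (fun k => uu M xs k xs) n, uu_zero]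

lemma pow_nonneg_entry {M : Matrix X X ℝ} (h0 : ∀ x y, 0 ≤ M x y) :
    ∀ n x y, 0 ≤ (M ^ n) x y := by
  intro n
  induction n with
  | zero => intro x y; by_cases h : x = y <;> simp [pow_zero, Matrix.one_apply, h]
  | succ n ih =>
    intro x y
    rw [pow_succ, Matrix.mul_apply]
    exact Finset.sum_nonneg fun z _ => mul_nonneg (ih x z) (h0 z y)

lemma pow_stochastic {M : Matrix X X ℝ} (hM : StochasticMat M) (n : ℕ) :
    StochasticMat (M ^ n) := by
  induction n with
  | zero =>
    constructor
    · intro x y; by_cases h : x = y <;> simp [pow_zero, Matrix.one_apply, h]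
    · intro x; simp [pow_zero, Matrix.one_apply]
  | succ n ih =>
    constructor
    · intro x y
      rw [pow_succ, Matrix.mul_apply]
      exact Finset.sum_nonneg fun z _ => mul_nonneg (ih.1 x z) (hM.1 z y)
    · intro x
      have : ∀ y, (M ^ (n+1)) x y = ∑ z, (M ^ n) x z * M z y := fun y => by
        rw [pow_succ, Matrix.mul_apply]
      simp only [this]
      rw [Finset.sum_comm]
      have : ∀ z, ∑ y, (M ^ n) x z * M z y = (M ^ n) x z := fun z => by
        rw [← Finset.mul_sum, hM.2 z, mul_one]
      simp only [this]
      exact ih.2 x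

lemma uu_le_pow {M : Matrix X X ℝ} (hM : StochasticMat M) (xs : X) :
    ∀ n x, uu M xs (n+1) x ≤ ∑ z, (if z ≠ xs then (M ^ (n+1)) x z else 0) := by
  intro n
  induction n with
  | zero =>
    intro x
    rw [uu_succ]
    refine le_of_eq (Finset.sum_congr rfl fun y _ => ?_)
    by_cases h : y ≠ xs
    · rw [if_pos h, if_pos h, uu_zero, mul_one, pow_one]
    · rw [if_neg h, if_neg h]
  | succ n ih =>
    intro x
    rw [uu_succ]
    have step1 : ∑ y, (if y ≠ xs then M x y * uu M xs (n+1) y else 0)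
        ≤ ∑ y, M x y * ∑ z, (if z ≠ xs then (M ^ (n+1)) y z else 0) := by
      refine Finset.sum_le_sum fun y _ => ?_
      by_cases h : y ≠ xs
      · rw [if_pos h]
        exact mul_le_mul_of_nonneg_left (ih y) (hM.1 x y)
      · rw [if_neg h]
        refine mul_nonneg (hM.1 x y) (Finset.sum_nonneg fun z _ => ?_)
        by_cases hz : z ≠ xs
        · rw [if_pos hz]; exact pow_nonneg_entry hM.1 _ y z
        · rw [if_neg hz]
    refine step1.trans (le_of_eq ?_)
    simp only [Finset.mul_sum]
    rw [Finset.sum_comm]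
    refine Finset.sum_congr rfl fun z _ => ?_
    by_cases hz : z ≠ xs
    · simp only [if_pos hz]
      rw [pow_succ' M (n+1), Matrix.mul_apply]
    · simp only [if_neg hz, mul_zero, Finset.sum_const_zero]


lemma uu_le_one_sub {M : Matrix X X ℝ} (hM : StochasticMat M) (xs : X) (n : ℕ) (x : X) :
    uu M xs (n+1) x ≤ 1 - (M ^ (n+1)) x xs := by
  refine (uu_le_pow hM xs n x).trans (le_of_eq ?_)
  rw [sum_ite_ne (fun z => (M ^ (n+1)) x z) xs, (pow_stochastic hM (n+1)).2 x]

lemma uu_add_le {M : Matrix X X ℝ} (h0 : ∀ x y, 0 ≤ M x y) (xs : X) (n : ℕ) (b : ℝ)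
    (hb0 : 0 ≤ b) (hb : ∀ y, uu M xs n y ≤ b) :
    ∀ k x, uu M xs (k + n) x ≤ uu M xs k x * b := by
  intro k
  induction k with
  | zero => intro x; rw [Nat.zero_add, uu_zero, one_mul]; exact hb x
  | succ k ih =>
    intro x
    rw [Nat.succ_add, uu_succ, uu_succ, Finset.sum_mul]
    refine Finset.sum_le_sum fun y _ => ?_
    by_cases h : y ≠ xs
    · rw [if_pos h, if_pos h, mul_assoc]
      exact mul_le_mul_of_nonneg_left (ih y) (h0 x y)
    · rw [if_neg h, if_neg h, zero_mul]

/-- key geometric decay from primitivity -/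
lemma uu_tendsto_zero [Nonempty X] {M : Matrix X X ℝ} (hM : StochasticMat M)
    (hprim : PrimitiveMat M) (xs : X) :
    Tendsto (fun n => uu M xs n xs) atTop (𝓝 0) := by
  obtain ⟨m, hm, hpos⟩ := hprim
  set b : ℝ := Finset.univ.sup' Finset.univ_nonempty (uu M xs m) with hbdef
  have hble : ∀ x, uu M xs m x ≤ b := fun x =>
    Finset.le_sup' (uu M xs m) (Finset.mem_univ x)
  have hb0 : 0 ≤ b := le_trans (uu_nonneg hM.1 xs m (Classical.arbitrary X))
    (hble _)
  have hb1 : b < 1 := by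
    rw [hbdef, Finset.sup'_lt_iff]
    intro x _
    obtain ⟨n, rfl⟩ : ∃ n, m = n + 1 := ⟨m - 1, by omega⟩
    calc uu M xs (n+1) x ≤ 1 - (M ^ (n+1)) x xs := uu_le_one_sub hM xs n x
    _ < 1 := by have := hpos x xs; linarith
  -- uu (j*m) ≤ b^j
  have hgeom : ∀ j x, uu M xs (j * m) x ≤ b ^ j := by
    intro j
    induction j with
    | zero => intro x; rw [Nat.zero_mul, uu_zero, pow_zero]
    | succ j ih =>
      intro x
      have : (j + 1) * m = m + j * m := by ring
      rw [this, pow_succ]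
      calc uu M xs (m + j * m) x ≤ uu M xs m x * b ^ j :=
            uu_add_le hM.1 xs (j * m) (b ^ j) (pow_nonneg hb0 j) ih m x
        _ ≤ b * b ^ j := mul_le_mul_of_nonneg_right (hble x) (pow_nonneg hb0 j)
        _ = b ^ j * b := mul_comm _ _
  -- antitone
  have hanti : ∀ n k, n ≤ k → uu M xs k xs ≤ uu M xs n xs := by
    have hstep : ∀ n x, uu M xs (n+1) x ≤ uu M xs n x := by
      intro n
      induction n with
      | zero =>
        intro x
        rw [uu_succ, uu_zero]
        simp only [uu_zero, mul_one]
        rw [sum_ite_ne (M x) xs, hM.2 x]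
        have := hM.1 x xs; linarith
      | succ n ih =>
        intro x
        rw [uu_succ, uu_succ]
        refine Finset.sum_le_sum fun y _ => ?_
        by_cases h : y ≠ xs
        · rw [if_pos h, if_pos h]
          exact mul_le_mul_of_nonneg_left (ih y) (hM.1 x y)
        · rw [if_neg h, if_neg h]
    intro n k hnk
    induction k with
    | zero => rw [Nat.le_zero.mp hnk]
    | succ k ih =>
      rcases Nat.lt_or_ge n (k+1) with hlt | hge
      · exact (hstep k xs).trans (ih (by omega))
      · rw [Nat.le_antisymm hnk hge]
  -- squeeze
  have hub : ∀ n, uu M xs n xs ≤ b ^ (n / m) := by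
    intro n
    calc uu M xs n xs ≤ uu M xs ((n / m) * m) xs :=
          hanti _ _ (Nat.div_mul_le_self n m)
      _ ≤ b ^ (n / m) := hgeom (n / m) xs
  have hlim : Tendsto (fun n : ℕ => b ^ (n / m)) atTop (𝓝 0) :=
    (tendsto_pow_atTop_nhds_zero_of_lt_one hb0 hb1).comp
      (Nat.tendsto_div_const_atTop (by omega))
  refine tendsto_of_tendsto_of_tendsto_of_le_of_le tendsto_const_nhds hlim
    (fun n => uu_nonneg hM.1 xs n xs) hub

lemma hasSum_term [Nonempty X] {M : Matrix X X ℝ} (hM : StochasticMat M)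
    (hprim : PrimitiveMat M) (xs : X) :
    HasSum (term M xs xs) 1 := by
  rw [hasSum_iff_tendsto_nat_of_nonneg (fun k => term_nonneg hM.1 xs xs k)]
  have : (fun n => ∑ k ∈ Finset.range n, term M xs xs k)
      = fun n => 1 - uu M xs n xs := by
    funext n; exact sum_range_term hM xs n
  rw [this]
  have := (uu_tendsto_zero hM hprim xs).const_sub 1
  simpa using this

end S2Aux

open S2Aux in
set_option maxHeartbeats 1000000 in
/-- Let `xs` be a (recurrent) state of the irreducible aperiodic finite
chain with transition matrix `P`, and `τ = inf {i ≥ 1 : Φ_i = xs}` the first return time.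
Then `Λ(α) = ln λ̂₁` (the log-Perron eigenvalue of `diag (e^{αC}) P`, characterized by its
strictly positive right eigenvector) is the unique real solution `Λ` of the fixed-point
equation `E_{xs}[exp (∑_{i=0}^{τ-1} (α C(Φ_i) − Λ))] = 1`. -/
theorem statement2 {X : Type*} [Fintype X] [DecidableEq X] [Nonempty X]
    (P : Matrix X X ℝ) (hP : StochasticMat P) (hprim : PrimitiveMat P)
    (C : X → ℝ) (α : ℝ) (hα : 0 < α) (xs : X)
    (lam : ℝ) (h : X → ℝ) (hpos : ∀ x, 0 < h x)
    (heig : (Matrix.of fun x y => Real.exp (α * C x) * P x y) *ᵥ h = lam • h) :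
    retE P xs xs
        (fun k p => Real.exp (∑ i : Fin (k + 1), (α * C (p i.castSucc) - Real.log lam)))
      = 1 ∧
    ∀ L : ℝ,
      retE P xs xs
          (fun k p => Real.exp (∑ i : Fin (k + 1), (α * C (p i.castSucc) - L))) = 1 →
        L = Real.log lam := by
  classical
  set Q : Matrix X X ℝ := Matrix.of fun x y => Real.exp (α * C x) * P x y with hQdef
  have hQ0 : ∀ x y, 0 ≤ Q x y := fun x y =>
    mul_nonneg (Real.exp_nonneg _) (hP.1 x y)
  have heig' : ∀ x, ∑ y, Q x y * h y = lam * h x := by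
    intro x
    have := congrFun heig x
    simpa [Matrix.mulVec, dotProduct, mul_comm] using this
  have hlam : 0 < lam := by
    obtain ⟨x⟩ := ‹Nonempty X›
    have hx : 0 < ∑ y, Q x y * h y := by
      obtain ⟨y, hy⟩ : ∃ y, 0 < P x y := by
        by_contra hc
        push_neg at hc
        have : ∑ y, P x y ≤ 0 :=
          Finset.sum_nonpos fun y _ => hc y
        rw [hP.2 x] at this; linarith
      refine Finset.sum_pos' (fun y _ => mul_nonneg (hQ0 x y) (hpos y).le) ⟨y, Finset.mem_univ y, ?_⟩
      exact mul_pos (mul_pos (Real.exp_pos _) hy) (hpos y)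
    rw [heig' x] at hx
    nlinarith [hpos x]
  set M : Matrix X X ℝ := Matrix.of fun x y => Q x y * h y / (lam * h x) with hMdef
  have hMapp : ∀ x y, M x y = Q x y * h y / (lam * h x) := fun x y => rfl
  have hM : StochasticMat M := by
    constructor
    · intro x y
      rw [hMapp]
      exact div_nonneg (mul_nonneg (hQ0 x y) (hpos y).le)
        (mul_pos hlam (hpos x)).le
    · intro x
      have hne : lam * h x ≠ 0 := (mul_pos hlam (hpos x)).ne'
      calc ∑ y, M x y = (∑ y, Q x y * h y) / (lam * h x) := by
            rw [Finset.sum_div]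
            exact Finset.sum_congr rfl fun y _ => hMapp x y
        _ = 1 := by rw [heig' x]; exact div_self hne
  have hMpow : ∀ n x y, (M ^ n) x y = (Q ^ n) x y * h y / (lam ^ n * h x) := by
    intro n
    induction n with
    | zero =>
      intro x y
      by_cases hxy : x = y
      · subst hxy
        simp [Matrix.one_apply_eq, (hpos x).ne']
      · simp [Matrix.one_apply_ne hxy]
    | succ n ih =>
      intro x y
      rw [pow_succ' M n, Matrix.mul_apply]
      have : ∀ z, M x z * (M ^ n) z y
          = Q x z * (Q ^ n) z y * h y / (lam ^ (n+1) * h x) := by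
        intro z
        rw [hMapp, ih]
        have h1 : lam ≠ 0 := hlam.ne'
        have h2 : h x ≠ 0 := (hpos x).ne'
        have h3 : h z ≠ 0 := (hpos z).ne'
        field_simp
        ring
      simp only [this]
      rw [← Finset.sum_div, ← Finset.sum_mul, pow_succ' Q n, Matrix.mul_apply]
  have hQpow_pos : ∀ n x y, 0 < (P ^ n) x y → 0 < (Q ^ n) x y := by
    intro n
    induction n with
    | zero =>
      intro x y
      by_cases hxy : x = y
      · subst hxy; simp
      · simp [Matrix.one_apply_ne hxy]
    | succ n ih =>
      intro x y hpxy
      rw [pow_succ' P n, Matrix.mul_apply] at hpxy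
      obtain ⟨z, hz⟩ : ∃ z, 0 < P x z * (P ^ n) z y := by
        by_contra hc
        push_neg at hc
        have : ∑ z, P x z * (P ^ n) z y ≤ 0 := Finset.sum_nonpos fun z _ => hc z
        linarith
      have hz1 : 0 < P x z := by
        rcases mul_pos_iff.mp hz with ⟨h1, _⟩ | ⟨h1, h2⟩
        · exact h1
        · exact absurd h2 (not_lt.mpr (pow_nonneg_entry hP.1 n z y))
      have hz2 : 0 < (P ^ n) z y := by
        rcases mul_pos_iff.mp hz with ⟨_, h2⟩ | ⟨h1, _⟩
        · exact h2
        · exact absurd h1 (not_lt.mpr (hP.1 x z))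
      rw [pow_succ' Q n, Matrix.mul_apply]
      refine Finset.sum_pos' (fun u _ => mul_nonneg (hQ0 x u) (pow_nonneg_entry hQ0 n u y))
        ⟨z, Finset.mem_univ z, mul_pos (mul_pos (Real.exp_pos _) hz1) (ih z y hz2)⟩
  have hMprim : PrimitiveMat M := by
    obtain ⟨n, hn, hp⟩ := hprim
    refine ⟨n, hn, fun x y => ?_⟩
    rw [hMpow]
    exact div_pos (mul_pos (hQpow_pos n x y (hp x y)) (hpos y))
      (mul_pos (pow_pos hlam n) (hpos x))
  -- key per-path identity
  have key : ∀ (L : ℝ) (k : ℕ) (w : Fin k → X),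
      (∏ i : Fin (k+1), P (pathv xs xs w i.castSucc) (pathv xs xs w i.succ)) *
        Real.exp (∑ i : Fin (k+1), (α * C (pathv xs xs w i.castSucc) - L))
      = Real.exp (Real.log lam - L) ^ (k+1) *
        ∏ i : Fin (k+1), M (pathv xs xs w i.castSucc) (pathv xs xs w i.succ) := by
    intro L k w
    set p : Fin (k+2) → X := pathv xs xs w with hpdef
    have hp0 : p 0 = xs := pathv_zero xs xs w
    have hplast : p (Fin.last (k+1)) = xs := pathv_last xs xs w
    have htel : (∏ i : Fin (k+1), h (p i.succ)) = ∏ i : Fin (k+1), h (p i.castSucc) := by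
      have h1 : ∏ i : Fin (k+2), h (p i)
          = h (p 0) * ∏ i : Fin (k+1), h (p i.succ) := Fin.prod_univ_succ (fun i => h (p i))
      have h2 : ∏ i : Fin (k+2), h (p i)
          = (∏ i : Fin (k+1), h (p i.castSucc)) * h (p (Fin.last (k+1))) :=
        Fin.prod_univ_castSucc (fun i => h (p i))
      rw [h2, hp0, hplast] at h1
      have h1' : h xs * (∏ i : Fin (k+1), h (p i.castSucc))
          = h xs * ∏ i : Fin (k+1), h (p i.succ) := by rw [← h1]; ring
      exact (mul_left_cancel₀ (hpos xs).ne' h1').symm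
    have hMfac : ∀ i : Fin (k+1), M (p i.castSucc) (p i.succ)
        = Real.exp (α * C (p i.castSucc)) * P (p i.castSucc) (p i.succ) * h (p i.succ)
          / (lam * h (p i.castSucc)) := fun i => rfl
    have hexp : Real.exp (∑ i : Fin (k+1), (α * C (p i.castSucc) - L))
        = (∏ i : Fin (k+1), Real.exp (α * C (p i.castSucc))) / Real.exp L ^ (k+1) := by
      rw [Real.exp_sum]
      have he : ∀ i : Fin (k+1), Real.exp (α * C (p i.castSucc) - L)
          = Real.exp (α * C (p i.castSucc)) / Real.exp L := fun i => Real.exp_sub _ _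
      simp only [he]
      rw [Finset.prod_div_distrib, Finset.prod_const, Finset.card_univ, Fintype.card_fin]
    have hprodM : (∏ i : Fin (k+1), M (p i.castSucc) (p i.succ))
        = (∏ i : Fin (k+1), Real.exp (α * C (p i.castSucc)))
          * (∏ i : Fin (k+1), P (p i.castSucc) (p i.succ)) / lam ^ (k+1) := by
      simp only [hMfac]
      rw [Finset.prod_div_distrib, Finset.prod_mul_distrib, Finset.prod_mul_distrib,
        Finset.prod_mul_distrib, htel, Finset.prod_const, Finset.card_univ, Fintype.card_fin]
      have hH : (∏ i : Fin (k+1), h (p i.castSucc)) ≠ 0 :=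
        Finset.prod_ne_zero_iff.mpr fun i _ => (hpos _).ne'
      have hlamne : (lam : ℝ) ^ (k+1) ≠ 0 := (pow_pos hlam _).ne'
      field_simp
    rw [hexp, hprodM, Real.exp_sub, Real.exp_log hlam, div_pow]
    have hEL : Real.exp L ^ (k+1) ≠ 0 := (pow_pos (Real.exp_pos L) _).ne'
    have hlamne : (lam : ℝ) ^ (k+1) ≠ 0 := (pow_pos hlam _).ne'
    field_simp
  -- inner sums
  have hinner : ∀ (L : ℝ) (k : ℕ),
      (∑ w : Fin k → X, if ∀ i, w i ≠ xs then
        (∏ i : Fin (k+1), P ((Fin.snoc (Fin.cons xs w) xs : Fin (k+2) → X) i.castSucc)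
          ((Fin.snoc (Fin.cons xs w) xs : Fin (k+2) → X) i.succ)) *
          Real.exp (∑ i : Fin (k+1),
            (α * C ((Fin.snoc (Fin.cons xs w) xs : Fin (k+2) → X) i.castSucc) - L)) else 0)
      = Real.exp (Real.log lam - L) ^ (k+1) * term M xs xs k := by
    intro L k
    rw [term, Finset.mul_sum]
    refine Finset.sum_congr rfl fun w _ => ?_
    by_cases hw : ∀ i, w i ≠ xs
    · rw [if_pos hw, if_pos hw]
      exact key L k w
    · rw [if_neg hw, if_neg hw, mul_zero]
  have hretE : ∀ L : ℝ, retE P xs xs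
      (fun k p => Real.exp (∑ i : Fin (k + 1), (α * C (p i.castSucc) - L)))
      = ∑' k : ℕ, Real.exp (Real.log lam - L) ^ (k+1) * term M xs xs k := by
    intro L
    rw [retE]
    exact tsum_congr fun k => hinner L k
  have ha := hasSum_term hM hMprim xs
  have hasum : Summable (term M xs xs) := ha.summable
  have htsum : ∑' k, term M xs xs k = 1 := ha.tsum_eq
  have h0a : ∀ k, 0 ≤ term M xs xs k := term_nonneg hM.1 xs xs
  constructor
  · rw [hretE]
    simp only [sub_self, Real.exp_zero, one_pow, one_mul]
    exact htsum
  · intro L hL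
    rw [hretE] at hL
    set t : ℝ := Real.exp (Real.log lam - L) with htdef
    have ht0 : 0 < t := Real.exp_pos _
    rcases lt_trichotomy t 1 with hlt | heq | hgt
    · exfalso
      have hfg : ∀ k, t ^ (k+1) * term M xs xs k ≤ t * term M xs xs k := by
        intro k
        refine mul_le_mul_of_nonneg_right ?_ (h0a k)
        calc t ^ (k+1) ≤ t ^ 1 := pow_le_pow_of_le_one ht0.le hlt.le (by omega)
          _ = t := pow_one t
      have hgsum : Summable (fun k => t * term M xs xs k) := hasum.mul_left t
      have hfsum : Summable (fun k => t ^ (k+1) * term M xs xs k) :=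
        Summable.of_nonneg_of_le (fun k => mul_nonneg (pow_nonneg ht0.le _) (h0a k)) hfg hgsum
      have hcmp : (∑' k, t ^ (k+1) * term M xs xs k) ≤ ∑' k, t * term M xs xs k :=
        Summable.tsum_le_tsum hfg hfsum hgsum
      rw [hL, tsum_mul_left, htsum, mul_one] at hcmp
      linarith
    · have h0 : Real.log lam - L = 0 := (Real.exp_eq_one_iff _).mp heq
      linarith
    · exfalso
      obtain ⟨k0, hk0⟩ : ∃ k, 0 < term M xs xs k := by
        by_contra hc
        push_neg at hc
        have hle0 : ∑' k, term M xs xs k ≤ 0 := tsum_nonpos hc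
        rw [htsum] at hle0; linarith
      by_cases hfsum : Summable (fun k => t ^ (k+1) * term M xs xs k)
      · have h1t : ∀ k : ℕ, 1 ≤ t ^ (k+1) := fun k => one_le_pow_iff_of_nonneg ht0.le (by omega) |>.mpr hgt.le
        have hle : ∀ k, term M xs xs k ≤ t ^ (k+1) * term M xs xs k := fun k =>
          le_mul_of_one_le_left (h0a k) (h1t k)
        have hstrict : term M xs xs k0 < t ^ (k0+1) * term M xs xs k0 :=
          lt_mul_of_one_lt_left hk0 (one_lt_pow₀ hgt (by omega))
        have hcmp := Summable.tsum_lt_tsum hle hstrict hasum hfsum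
        rw [htsum, hL] at hcmp
        linarith
      · rw [tsum_eq_zero_of_not_summable hfsum] at hL; linarith
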